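/- Let δ : A → A ⊗ C*(G) be a coaction of a discrete groupoid G on a C*-algebra A. Then A is a topologically G-graded C*-algebra with grading given by the spectral subspaces A_g^δ = {a ∈ A : δ(a) = a ⊗ U_g}; the conditional expectation is E_A = δ⁻¹ ∘ (id ⊗ E_{C*(G)}) ∘ δ, where E_{C*(G)} is the canonical conditional expectation of C*(G) onto the closed span of {U_{1_x}}. -/

import Mathlib

open CategoryTheory
open scoped Classical

universe v u u₁ u₂

def Mor (V : Type v) [Groupoid V] := Σ (x : V) (y : V), x ⟶ y

namespace Mor

variable {V : Type v} [Groupoid V]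

def src (f : Mor V) : V := f.1
def tgt (f : Mor V) : V := f.2.1
def hom (f : Mor V) : f.src ⟶ f.tgt := f.2.2

def comp (g f : Mor V) (h : f.tgt = g.src) : Mor V :=
  ⟨f.src, g.tgt, f.hom ≫ eqToHom h ≫ g.hom⟩

def inv (f : Mor V) : Mor V := ⟨f.tgt, f.src, Groupoid.inv f.hom⟩
def id (x : V) : Mor V := ⟨x, x, 𝟙 x⟩

/-- `f` is an identity morphism. -/
def IsId (f : Mor V) : Prop := ∃ x : V, f = Mor.id x

end Mor

variable {V : Type v} [Groupoid V]
  {A : Type u} [NonUnitalCStarAlgebra A]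
  {Cg : Type u₁} [NonUnitalCStarAlgebra Cg]
  {T : Type u₂} [NonUnitalCStarAlgebra T]

/-- The spectral subspace `A_g^δ = {a ∈ A : δ(a) = a ⊗ U_g}` of a coaction. -/
def spec (δ : A →⋆ₙₐ[ℂ] T) (tmul : A →ₗ[ℂ] Cg →ₗ[ℂ] T) (U : Mor V → Cg)
    (g : Mor V) : Submodule ℂ A where
  carrier := {a | δ a = tmul a (U g)}
  add_mem' := by
    intro a b ha hb
    simp only [Set.mem_setOf_eq] at *
    rw [map_add, ha, hb, map_add, LinearMap.add_apply]
  zero_mem' := by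
    simp only [Set.mem_setOf_eq, map_zero, LinearMap.zero_apply]
  smul_mem' := by
    intro c a ha
    simp only [Set.mem_setOf_eq] at *
    rw [map_smul, ha, map_smul, LinearMap.smul_apply]


section Aux

open CategoryTheory

variable {V : Type v} [Groupoid V]

lemma Mor.inv_comp_self' (f : Mor V) : f.inv.comp f rfl = Mor.id f.src := by
  obtain ⟨a, b, φ⟩ := f
  simp [Mor.comp, Mor.inv, Mor.id, Mor.src, Mor.tgt, Mor.hom]
  show (⟨a, a, φ ≫ eqToHom (rfl : b = b) ≫ CategoryTheory.inv φ⟩ : Mor V) = ⟨a, a, 𝟙 a⟩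
  rw [eqToHom_refl, Category.id_comp, IsIso.hom_inv_id]

lemma Mor.eq_of_inv_comp_isId {f g : Mor V} (h : g.tgt = Mor.src f.inv)
    (hid : (f.inv.comp g h).IsId) : g = f := by
  obtain ⟨x, hx⟩ := hid
  obtain ⟨fa, fb, φ⟩ := f
  obtain ⟨ga, gb, ψ⟩ := g
  dsimp [Mor.tgt, Mor.src, Mor.inv] at h
  subst h
  dsimp [Mor.comp, Mor.inv, Mor.id, Mor.src, Mor.tgt, Mor.hom] at hx
  obtain ⟨h1, h2⟩ := Sigma.mk.inj_iff.mp hx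
  subst h1
  obtain ⟨h3, h4⟩ := Sigma.mk.inj_iff.mp (eq_of_heq h2)
  subst h3
  have h5 := eq_of_heq h4
  have h6 : ψ = φ := by
    have := congrArg (fun t => t ≫ φ) h5
    simpa [Category.assoc, Groupoid.inv_comp] using this
  rw [h6]

end Aux

section Aux2

variable {V : Type v} [Groupoid V]
  {A : Type u} [NonUnitalCStarAlgebra A]
  {Cg : Type u₁} [NonUnitalCStarAlgebra Cg]
  {T : Type u₂} [NonUnitalCStarAlgebra T]

lemma mem_spec {δ : A →⋆ₙₐ[ℂ] T} {tmul : A →ₗ[ℂ] Cg →ₗ[ℂ] T} {U : Mor V → Cg}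
    {g : Mor V} {a : A} : a ∈ spec δ tmul U g ↔ δ a = tmul a (U g) := Iff.rfl

end Aux2

/-- a coaction `δ : A → A ⊗ C*(G)` of a discrete groupoid `G` on
a C*-algebra `A` (an injective *-homomorphism whose spectral subspaces
`A_g^δ = {a : δ(a) = a ⊗ U_g}` have dense span) makes `A` a topologically
`G`-graded C*-algebra, graded by the spectral subspaces, with conditional
expectation `E_A = δ⁻¹ ∘ (id ⊗ E_{C*(G)}) ∘ δ`. -/
theorem statement17 [PartialOrder A] [StarOrderedRing A]
    -- the full groupoid C*-algebra with its generators
    (U : Mor V → Cg)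
    (hUmul : ∀ (f g : Mor V) (h : g.tgt = f.src), U f * U g = U (f.comp g h))
    (hUzero : ∀ f g : Mor V, g.tgt ≠ f.src → U f * U g = 0)
    (hUstar : ∀ f : Mor V, star (U f) = U f.inv)
    -- the canonical conditional expectation of `C*(G)` and `id ⊗ E_{C*(G)}`
    (EG : Cg →L[ℂ] Cg)
    (hEGid : ∀ x : V, EG (U (Mor.id x)) = U (Mor.id x))
    (hEG0 : ∀ g : Mor V, ¬ g.IsId → EG (U g) = 0)
    -- the spatial tensor product `T = A ⊗ C*(G)`
    (tmul : A →ₗ[ℂ] Cg →ₗ[ℂ] T)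
    (hTmul : ∀ (a b : A) (u w : Cg), tmul a u * tmul b w = tmul (a * b) (u * w))
    (hTstar : ∀ (a : A) (u : Cg), star (tmul a u) = tmul (star a) (star u))
    (hTnorm : ∀ (a : A) (u : Cg), ‖tmul a u‖ = ‖a‖ * ‖u‖)
    (idEG : T →L[ℂ] T)
    (hidEG : ∀ (a : A) (u : Cg), idEG (tmul a u) = tmul a (EG u))
    -- the coaction
    (δ : A →⋆ₙₐ[ℂ] T)
    (hinj : Function.Injective δ)
    (hδdense : Dense
      (↑(Submodule.span ℂ (⋃ g : Mor V, (spec δ tmul U g : Set A))) : Set A)) :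
    -- `{A_g^δ}` is a topological `G`-grading of `A`:
    (∀ g : Mor V, IsClosed (spec δ tmul U g : Set A)) ∧
    (∀ (f g : Mor V) (h : g.tgt = f.src) (a b : A), a ∈ spec δ tmul U f →
      b ∈ spec δ tmul U g → a * b ∈ spec δ tmul U (f.comp g h)) ∧
    (∀ f g : Mor V, g.tgt ≠ f.src → ∀ a b : A, a ∈ spec δ tmul U f →
      b ∈ spec δ tmul U g → a * b = 0) ∧
    (∀ (g : Mor V) (a : A), a ∈ spec δ tmul U g → star a ∈ spec δ tmul U g.inv) ∧
    (∀ (s : Finset (Mor V)) (b : Mor V → A), (∀ f, b f ∈ spec δ tmul U f) →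
      (∑ f ∈ s, b f) = 0 → ∀ f ∈ s, b f = 0) ∧
    -- and `E_A = δ⁻¹ ∘ (id ⊗ E_{C*(G)}) ∘ δ` is a conditional expectation:
    ∃ EA : A →L[ℂ] A,
      (∀ a : A, δ (EA a) = idEG (δ a)) ∧
      ‖EA‖ ≤ 1 ∧
      (∀ a : A, 0 ≤ a → 0 ≤ EA a) ∧
      (∀ a ∈ closure (↑(Submodule.span ℂ
          (⋃ x : V, (spec δ tmul U (Mor.id x) : Set A))) : Set A), EA a = a) ∧
      (∀ g : Mor V, ¬ g.IsId → ∀ a ∈ spec δ tmul U g, EA a = 0) := by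
  classical
  have hnorm : ∀ a : A, ‖δ a‖ = ‖a‖ := fun a => NonUnitalStarAlgHom.norm_map δ hinj a
  have hδcont : Continuous δ := (NonUnitalStarAlgHom.isometry δ hinj).continuous
  have htcont : ∀ u : Cg, Continuous fun a : A => tmul a u := by
    intro u
    refine AddMonoidHomClass.continuous_of_bound (tmul.flip u) ‖u‖ fun a => ?_
    rw [LinearMap.flip_apply, hTnorm, mul_comm]
  have hclosed : ∀ g : Mor V, IsClosed (spec δ tmul U g : Set A) := fun g =>
    isClosed_eq hδcont (htcont (U g))
  have hmul : ∀ (f g : Mor V) (h : g.tgt = f.src) (a b : A), a ∈ spec δ tmul U f →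
      b ∈ spec δ tmul U g → a * b ∈ spec δ tmul U (f.comp g h) := by
    intro f g h a b ha hb
    rw [mem_spec] at *
    rw [map_mul, ha, hb, hTmul, hUmul f g h]
  have hzero : ∀ f g : Mor V, g.tgt ≠ f.src → ∀ a b : A, a ∈ spec δ tmul U f →
      b ∈ spec δ tmul U g → a * b = 0 := by
    intro f g h a b ha hb
    apply hinj
    rw [mem_spec] at ha hb
    rw [map_mul, ha, hb, hTmul, hUzero f g h, map_zero, map_zero]
  have hstar : ∀ (g : Mor V) (a : A), a ∈ spec δ tmul U g → star a ∈ spec δ tmul U g.inv := by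
    intro g a ha
    rw [mem_spec] at *
    rw [map_star, ha, hTstar, hUstar]
  have hind : ∀ (s : Finset (Mor V)) (b : Mor V → A), (∀ f, b f ∈ spec δ tmul U f) →
      (∑ f ∈ s, b f) = 0 → ∀ f ∈ s, b f = 0 := by
    intro s b hb hsum f₀ hf₀
    have hterm : ∀ f ∈ s, idEG (δ (star (b f₀) * b f)) =
        if f = f₀ then δ (star (b f₀) * b f₀) else 0 := by
      intro f _
      have h1 : δ (star (b f₀) * b f) = tmul (star (b f₀) * b f) (U f₀.inv * U f) := by
        rw [map_mul, map_star, hb f₀, hb f, hTstar, hUstar, hTmul]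
      by_cases hf : f = f₀
      · subst hf
        rw [if_pos rfl, h1, hUmul f.inv f rfl, Mor.inv_comp_self', hidEG, hEGid]
      · rw [if_neg hf, h1]
        by_cases ht : Mor.tgt f = Mor.tgt f₀
        · rw [hUmul f₀.inv f ht, hidEG, hEG0, map_zero]
          intro hid
          exact hf (Mor.eq_of_inv_comp_isId ht hid)
        · rw [hUzero f₀.inv f ht, map_zero, map_zero]
    have hkey : δ (star (b f₀) * b f₀) = 0 := by
      have h2 : idEG (δ (star (b f₀) * ∑ f ∈ s, b f)) = 0 := by
        rw [hsum, mul_zero, map_zero, map_zero]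
      rw [Finset.mul_sum, map_sum, map_sum, Finset.sum_congr rfl hterm,
        Finset.sum_ite_eq' s f₀ (fun _ => δ (star (b f₀) * b f₀)), if_pos hf₀] at h2
      exact h2
    have h3 : star (b f₀) * b f₀ = 0 := hinj (by rw [hkey, map_zero])
    exact (CStarRing.star_mul_self_eq_zero_iff (b f₀)).mp h3
  -- conditional expectation
  have hSuniv : ∀ a : A,
      a ∈ closure (↑(Submodule.span ℂ (⋃ g : Mor V, (spec δ tmul U g : Set A))) : Set A) := by
    intro a; rw [hδdense.closure_eq]; trivial
  let δl : A →ₗ[ℂ] T :=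
    { toFun := δ, map_add' := fun x y => map_add δ x y, map_smul' := fun c x => map_smul δ c x }
  have hrangeclosed : IsClosed (Set.range δ) :=
    ((NonUnitalStarAlgHom.isometry δ hinj).isClosedEmbedding).isClosed_range
  have hrange : ∀ a : A, ∃ c : A, δ c = idEG (δ a) := by
    have hsub : (↑(Submodule.span ℂ (⋃ g : Mor V, (spec δ tmul U g : Set A))) : Set A) ⊆
        {a : A | idEG (δ a) ∈ Set.range δ} := by
      have hle : Submodule.span ℂ (⋃ g : Mor V, (spec δ tmul U g : Set A)) ≤
          Submodule.comap ((idEG : T →ₗ[ℂ] T).comp δl) (LinearMap.range δl) := by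
        rw [Submodule.span_le]
        intro a ha
        rw [Set.mem_iUnion] at ha
        obtain ⟨g, hg⟩ := ha
        simp only [SetLike.mem_coe, Submodule.mem_comap, LinearMap.mem_range, LinearMap.coe_comp,
          Function.comp_apply, ContinuousLinearMap.coe_coe]
        by_cases hid : g.IsId
        · obtain ⟨x, rfl⟩ := hid
          refine ⟨a, ?_⟩
          show δ a = idEG (δl a)
          show δ a = idEG (δ a)
          rw [mem_spec.mp hg, hidEG, hEGid]
        · refine ⟨0, ?_⟩
          show δl 0 = idEG (δl a)
          show δ 0 = idEG (δ a)
          rw [mem_spec.mp hg, hidEG, hEG0 g hid, map_zero, map_zero]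
      intro a ha
      have := hle ha
      simp only [Submodule.mem_comap, LinearMap.mem_range, LinearMap.coe_comp,
        Function.comp_apply, ContinuousLinearMap.coe_coe] at this
      obtain ⟨c, hc⟩ := this
      exact ⟨c, hc⟩
    have hcl : IsClosed {a : A | idEG (δ a) ∈ Set.range δ} :=
      hrangeclosed.preimage (idEG.continuous.comp hδcont)
    intro a
    have := (hcl.closure_subset_iff.mpr hsub) (hSuniv a)
    obtain ⟨c, hc⟩ := this
    exact ⟨c, hc⟩
  choose E0 hE0 using hrange
  have hE0add : ∀ x y, E0 (x + y) = E0 x + E0 y := fun x y =>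
    hinj (by rw [map_add, hE0, hE0, hE0, map_add, map_add])
  have hE0smul : ∀ (c : ℂ) (x : A), E0 (c • x) = c • E0 x := fun c x =>
    hinj (by rw [map_smul, hE0, hE0, map_smul, map_smul])
  have hE0bound : ∀ a, ‖E0 a‖ ≤ ‖idEG‖ * ‖a‖ := by
    intro a
    rw [← hnorm (E0 a), hE0]
    calc ‖idEG (δ a)‖ ≤ ‖idEG‖ * ‖δ a‖ := idEG.le_opNorm (δ a)
      _ = ‖idEG‖ * ‖a‖ := by rw [hnorm]
  let E0l : A →ₗ[ℂ] A :=
    { toFun := E0, map_add' := hE0add, map_smul' := hE0smul }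
  let EA : A →L[ℂ] A := E0l.mkContinuous ‖idEG‖ hE0bound
  have hEAapp : ∀ a, EA a = E0 a := fun a => rfl
  have hEAδ : ∀ a, δ (EA a) = idEG (δ a) := fun a => hE0 a
  have hfixspec : ∀ (x : V) (a : A), a ∈ spec δ tmul U (Mor.id x) → EA a = a := by
    intro x a ha
    apply hinj
    rw [hEAδ, mem_spec.mp ha, hidEG, hEGid]
  have hkill : ∀ g : Mor V, ¬ g.IsId → ∀ a ∈ spec δ tmul U g, EA a = 0 := by
    intro g hg a ha
    apply hinj
    rw [hEAδ, map_zero, mem_spec.mp ha, hidEG, hEG0 g hg, map_zero]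
  have hfix : ∀ a ∈ closure (↑(Submodule.span ℂ
      (⋃ x : V, (spec δ tmul U (Mor.id x) : Set A))) : Set A), EA a = a := by
    have hclosedF : IsClosed {a : A | EA a = a} := isClosed_eq EA.continuous continuous_id
    have hspan : (↑(Submodule.span ℂ (⋃ x : V, (spec δ tmul U (Mor.id x) : Set A))) : Set A) ⊆
        {a : A | EA a = a} := by
      have hle : Submodule.span ℂ (⋃ x : V, (spec δ tmul U (Mor.id x) : Set A)) ≤
          LinearMap.eqLocus (EA : A →ₗ[ℂ] A) LinearMap.id := by
        rw [Submodule.span_le]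
        intro a ha
        rw [Set.mem_iUnion] at ha
        obtain ⟨x, hx⟩ := ha
        exact hfixspec x a hx
      intro a ha
      exact hle ha
    intro a ha
    exact (hclosedF.closure_subset_iff.mpr hspan) ha
  have hEAspec : ∀ (f : Mor V) (af : A), af ∈ spec δ tmul U f →
      EA af = if f.IsId then af else 0 := by
    intro f af haf
    by_cases h : f.IsId
    · rw [if_pos h]
      obtain ⟨x, rfl⟩ := h
      exact hfixspec x af haf
    · rw [if_neg h]
      exact hkill f h af haf
  have hPair : ∀ (f g : Mor V) (af ag : A), af ∈ spec δ tmul U f → ag ∈ spec δ tmul U g →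
      EA (star af * ag) = if g = f then star af * ag else 0 := by
    intro f g af ag haf hag
    by_cases hfg : g = f
    · subst hfg
      rw [if_pos rfl]
      have hmem : star af * ag ∈ spec δ tmul U (Mor.id g.src) := by
        have := hmul g.inv g rfl (star af) ag (hstar g af haf) hag
        rwa [Mor.inv_comp_self'] at this
      exact hfixspec g.src _ hmem
    · rw [if_neg hfg]
      by_cases ht : Mor.tgt g = Mor.tgt f
      · have hmem : star af * ag ∈ spec δ tmul U (f.inv.comp g ht) :=
          hmul f.inv g ht (star af) ag (hstar f af haf) hag
        exact hkill _ (fun hid => hfg (Mor.eq_of_inv_comp_isId ht hid)) _ hmem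
      · have h0 : star af * ag = 0 := hzero f.inv g ht (star af) ag (hstar f af haf) hag
        rw [h0, map_zero]
  have hrep : ∀ a ∈ Submodule.span ℂ (⋃ g : Mor V, (spec δ tmul U g : Set A)),
      ∃ l : Mor V →₀ A, (∀ f, l f ∈ spec δ tmul U f) ∧ (l.sum fun _ x => x) = a := by
    intro a ha
    rw [Submodule.span_iUnion] at ha
    simp only [Submodule.span_eq] at ha
    rw [Submodule.mem_iSup_iff_exists_finsupp] at ha
    obtain ⟨l, hl, hsum⟩ := ha
    exact ⟨l, hl, hsum⟩
  have hSchspan : (↑(Submodule.span ℂ (⋃ g : Mor V, (spec δ tmul U g : Set A))) : Set A) ⊆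
      {a : A | star (EA a) * EA a ≤ EA (star a * a)} := by
    intro a ha
    obtain ⟨l, hl, rfl⟩ := hrep a ha
    rw [Finsupp.sum]
    set s := l.support with hs
    simp only [Set.mem_setOf_eq]
    have hmmem : ∀ f : Mor V, (if f.IsId then l f else 0) ∈ spec δ tmul U f := by
      intro f
      by_cases h : f.IsId
      · rw [if_pos h]; exact hl f
      · rw [if_neg h]; exact zero_mem _
    have hEAsum : EA (∑ f ∈ s, l f) = ∑ f ∈ s, (if f.IsId then l f else 0) := by
      rw [map_sum]
      exact Finset.sum_congr rfl fun f _ => hEAspec f (l f) (hl f)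
    have hRHS : EA (star (∑ f ∈ s, l f) * ∑ f ∈ s, l f) = ∑ f ∈ s, star (l f) * l f := by
      rw [star_sum, Finset.sum_mul_sum, map_sum]
      refine Finset.sum_congr rfl fun f hf => ?_
      rw [map_sum]
      have h1 : ∀ g ∈ s, EA (star (l f) * l g) = if g = f then star (l f) * l g else 0 :=
        fun g _ => hPair f g (l f) (l g) (hl f) (hl g)
      rw [Finset.sum_congr rfl h1,
        Finset.sum_ite_eq' s f (fun g => star (l f) * l g), if_pos hf]
    have hLHS : star (EA (∑ f ∈ s, l f)) * EA (∑ f ∈ s, l f) =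
        ∑ f ∈ s, star (if f.IsId then l f else 0) * (if f.IsId then l f else 0) := by
      rw [hEAsum, star_sum, Finset.sum_mul_sum]
      refine Finset.sum_congr rfl fun f hf => ?_
      have h1 : ∀ g ∈ s, star (if f.IsId then l f else 0) * (if g.IsId then l g else 0) =
          if g = f then star (if f.IsId then l f else 0) * (if g.IsId then l g else 0)
          else 0 := by
        intro g _
        by_cases hgf : g = f
        · rw [if_pos hgf]
        · rw [if_neg hgf]
          by_cases hfId : f.IsId
          · by_cases hgId : g.IsId
            · rw [if_pos hfId, if_pos hgId]
              obtain ⟨x, rfl⟩ := hfId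
              obtain ⟨y, rfl⟩ := hgId
              refine hzero (Mor.id x).inv (Mor.id y) ?_ _ _
                (hstar (Mor.id x) (l (Mor.id x)) (hl (Mor.id x))) (hl (Mor.id y))
              intro hxy
              refine hgf ?_
              have hyx : y = x := hxy
              rw [hyx]
            · rw [if_neg hgId, mul_zero]
          · rw [if_neg hfId, star_zero, zero_mul]
      rw [Finset.sum_congr rfl h1, Finset.sum_ite_eq' s f
        (fun g => star (if f.IsId then l f else 0) * (if g.IsId then l g else 0)), if_pos hf]
    rw [hLHS, hRHS]
    refine Finset.sum_le_sum fun f _ => ?_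
    by_cases h : f.IsId
    · rw [if_pos h]
    · rw [if_neg h, star_zero, zero_mul]
      exact star_mul_self_nonneg (l f)
  have hSch : ∀ a : A, star (EA a) * EA a ≤ EA (star a * a) := by
    have hQ : IsClosed {a : A | star (EA a) * EA a ≤ EA (star a * a)} := by
      refine isClosed_le ?_ ?_
      · exact (EA.continuous.star).mul EA.continuous
      · exact EA.continuous.comp (continuous_star.mul continuous_id)
    intro a
    exact (hQ.closure_subset_iff.mpr hSchspan) (hSuniv a)
  have hposEA : ∀ a : A, 0 ≤ a → 0 ≤ EA a := by
    intro a ha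
    rw [StarOrderedRing.nonneg_iff] at ha
    induction ha using AddSubmonoid.closure_induction with
    | mem x hx =>
      obtain ⟨c, rfl⟩ := hx
      exact le_trans (star_mul_self_nonneg (EA c)) (hSch c)
    | zero => rw [map_zero]
    | add x y _ _ hx hy =>
      rw [map_add]
      exact add_nonneg hx hy
  have hposbound : ∀ (n : ℕ) (c : A), 0 ≤ c → ‖EA c‖ ^ 2 ^ n ≤ ‖idEG‖ * ‖c‖ ^ 2 ^ n := by
    intro n
    induction n with
    | zero =>
      intro c hc
      simpa [hEAapp] using hE0bound c
    | succ n ih =>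
      intro c hc
      have hsa : star c = c := (IsSelfAdjoint.of_nonneg hc).star_eq
      have h1 : star (EA c) * EA c ≤ EA (c * c) := by
        have := hSch c
        rwa [hsa] at this
      have hcc : (0 : A) ≤ c * c := by
        have := star_mul_self_nonneg c
        rwa [hsa] at this
      have h2 : ‖EA c‖ ^ 2 ≤ ‖EA (c * c)‖ := by
        calc ‖EA c‖ ^ 2 = ‖star (EA c) * EA c‖ := by rw [CStarRing.norm_star_mul_self, sq]
          _ ≤ ‖EA (c * c)‖ :=
            CStarAlgebra.norm_le_norm_of_nonneg_of_le (star_mul_self_nonneg _) h1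
      have h4 : ‖c * c‖ = ‖c‖ ^ 2 := by
        nth_rewrite 1 [← hsa]
        rw [CStarRing.norm_star_mul_self, sq]
      calc ‖EA c‖ ^ 2 ^ (n + 1) = (‖EA c‖ ^ 2) ^ 2 ^ n := by
            rw [← pow_mul, ← pow_succ']
        _ ≤ ‖EA (c * c)‖ ^ 2 ^ n := pow_le_pow_left₀ (sq_nonneg _) h2 _
        _ ≤ ‖idEG‖ * ‖c * c‖ ^ 2 ^ n := ih (c * c) hcc
        _ = ‖idEG‖ * ‖c‖ ^ 2 ^ (n + 1) := by
            rw [h4, ← pow_mul, ← pow_succ']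
  have hpos_le : ∀ c : A, 0 ≤ c → ‖EA c‖ ≤ ‖c‖ := by
    intro c hc
    by_contra hlt
    push_neg at hlt
    rcases eq_or_lt_of_le (norm_nonneg c) with h0 | h0
    · have hc0 : c = 0 := norm_eq_zero.mp h0.symm
      rw [hc0, map_zero, norm_zero] at hlt
      exact lt_irrefl 0 hlt
    · set r := ‖EA c‖ / ‖c‖ with hr
      have hr1 : 1 < r := (one_lt_div h0).mpr hlt
      obtain ⟨n, hn⟩ := pow_unbounded_of_one_lt ‖idEG‖ hr1
      have hb := hposbound n c hc
      have h5 : r ^ 2 ^ n ≤ ‖idEG‖ := by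
        rw [hr, div_pow, div_le_iff₀ (by positivity)]
        calc ‖EA c‖ ^ 2 ^ n ≤ ‖idEG‖ * ‖c‖ ^ 2 ^ n := hb
          _ = ‖idEG‖ * ‖c‖ ^ 2 ^ n := rfl
      have h6 : r ^ n ≤ r ^ 2 ^ n := pow_le_pow_right₀ hr1.le (Nat.le_of_lt (Nat.lt_two_pow_self (n := n)))
      exact absurd (le_trans h6 h5) (not_le.mpr hn)
  have hEAle : ∀ a : A, ‖EA a‖ ≤ ‖a‖ := by
    intro a
    have h2 : ‖EA a‖ ^ 2 ≤ ‖a‖ ^ 2 := by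
      calc ‖EA a‖ ^ 2 = ‖star (EA a) * EA a‖ := by rw [CStarRing.norm_star_mul_self, sq]
        _ ≤ ‖EA (star a * a)‖ :=
          CStarAlgebra.norm_le_norm_of_nonneg_of_le (star_mul_self_nonneg _) (hSch a)
        _ ≤ ‖star a * a‖ := hpos_le _ (star_mul_self_nonneg a)
        _ = ‖a‖ ^ 2 := by rw [CStarRing.norm_star_mul_self, sq]
    nlinarith [norm_nonneg (EA a), norm_nonneg a]
  have hEAnorm : ‖EA‖ ≤ 1 := EA.opNorm_le_bound zero_le_one fun a => by
    simpa using hEAle a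
  exact ⟨hclosed, hmul, hzero, hstar, hind, EA, hEAδ, hEAnorm, hposEA, hfix, hkill⟩
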